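/- Let Λ = k[x, z, s, s^{-1}]/(xz, x³ + z³), char k = 2. There is no k-bilinear map g of degree -1 on Λ such that the Hochschild coboundary equations x·g(z,x²) + g(x,z)·x² = x³, x²·g(x,z) + g(x³,z) + g(x²,x)·z = 0, z·g(x²,x) + g(z,x³) + g(z,x²)·x = 0, z·g(z²,z) + g(z³,z) + g(z,z³) + g(z,z²)·z = 0, and z²·g(z,z) + z·g(z²,z) + z·g(z,z²) + z·g(z,z)·z = 0 all hold; summing them gives the contradiction x³ = 0, while x³ ≠ 0 in Λ. -/

import Mathlib

open MvPolynomial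

/-- `k[x,y][s,s⁻¹]`: Laurent polynomials in `s` over `k[x,y]`. -/
noncomputable abbrev LaurentXY (k : Type) [Field k] : Type :=
  LaurentPolynomial (MvPolynomial (Fin 2) k)

/-- The Tate cohomology ring of `Q_{4t}`, `t ≥ 4`:
`Λ = k[x,y,s,s⁻¹]/(y³, x² + xy)`. -/
noncomputable abbrev LamQt (k : Type) [Field k] : Type :=
  LaurentXY k ⧸ (Ideal.span
    {LaurentPolynomial.C ((X 1 : MvPolynomial (Fin 2) k) ^ 3),
     LaurentPolynomial.C (X 0 ^ 2 + X 0 * X 1)} : Ideal (LaurentXY k))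

/-- `Λ` in the variables `x, z`: `k[x,z,s,s⁻¹]/(xz, x³ + z³)`. -/
noncomputable abbrev LamXZ (k : Type) [Field k] : Type :=
  LaurentXY k ⧸ (Ideal.span
    {LaurentPolynomial.C ((X 0 : MvPolynomial (Fin 2) k) * X 1),
     LaurentPolynomial.C ((X 0 : MvPolynomial (Fin 2) k) ^ 3 + X 1 ^ 3)} : Ideal (LaurentXY k))

/-- The class of `x` in `LamQt`. -/
noncomputable def tx (k : Type) [Field k] : LamQt k :=
  Ideal.Quotient.mk _ (LaurentPolynomial.C (X 0))
/-- The class of `y` in `LamQt`. -/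
noncomputable def ty (k : Type) [Field k] : LamQt k :=
  Ideal.Quotient.mk _ (LaurentPolynomial.C (X 1))
/-- The class of `x` in `LamXZ`. -/
noncomputable def wx (k : Type) [Field k] : LamXZ k :=
  Ideal.Quotient.mk _ (LaurentPolynomial.C (X 0))
/-- The class of `z` in `LamXZ`. -/
noncomputable def wz (k : Type) [Field k] : LamXZ k :=
  Ideal.Quotient.mk _ (LaurentPolynomial.C (X 1))

set_option maxHeartbeats 2000000

lemma stmt14_mvaux (k : Type) [Field k] [CharP k 2]
    (p q : MvPolynomial (Fin 2) k)
    (h : p * (X 0 * X 1) + q * ((X 0 : MvPolynomial (Fin 2) k) ^ 3 + X 1 ^ 3) = X 0 ^ 3) :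
    False := by
  have h1 := congrArg (coeff (Finsupp.single (0 : Fin 2) 3)) h
  have h2 := congrArg (coeff (Finsupp.single (1 : Fin 2) 3)) h
  simp only [← mul_assoc, mul_add, coeff_add, coeff_mul_X', X_pow_eq_monomial,
    coeff_mul_monomial', Finsupp.mem_support_iff, Finsupp.single_apply,
    Finsupp.single_le_iff] at h1 h2
  norm_num at h1 h2
  simp [Finsupp.single_eq_single_iff] at h2
  exact one_ne_zero (h1.symm.trans h2)

lemma stmt14_laux (k : Type) [Field k] [CharP k 2]
    (u v : LaurentPolynomial (MvPolynomial (Fin 2) k))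
    (h : u * LaurentPolynomial.C ((X 0 : MvPolynomial (Fin 2) k) * X 1)
       + v * LaurentPolynomial.C ((X 0 : MvPolynomial (Fin 2) k) ^ 3 + X 1 ^ 3)
       = LaurentPolynomial.C ((X 0 : MvPolynomial (Fin 2) k) ^ 3)) :
    False := by
  have h0 := congrArg (fun L : LaurentPolynomial (MvPolynomial (Fin 2) k) => L.coeff 0) h
  have h0' : ((u * AddMonoidAlgebra.single (0 : ℤ) ((X 0 : MvPolynomial (Fin 2) k) * X 1)
        : LaurentPolynomial (MvPolynomial (Fin 2) k)).coeff 0)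
      + ((v * AddMonoidAlgebra.single (0 : ℤ) ((X 0 : MvPolynomial (Fin 2) k) ^ 3 + X 1 ^ 3)
        : LaurentPolynomial (MvPolynomial (Fin 2) k)).coeff 0)
      = (Finsupp.single (0 : ℤ) ((X 0 : MvPolynomial (Fin 2) k) ^ 3)) 0 := h0
  simp only [AddMonoidAlgebra.coeff_mul_single_apply, sub_zero, neg_zero, add_zero,
    Finsupp.single_eq_same] at h0'
  exact stmt14_mvaux k _ _ h0'

lemma stmt14_x3_ne (k : Type) [Field k] [CharP k 2] : wx k ^ 3 ≠ 0 := by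
  intro h
  have hmk : (Ideal.Quotient.mk _ (LaurentPolynomial.C ((X 0 : MvPolynomial (Fin 2) k) ^ 3))
      : LamXZ k) = 0 := by
    rw [map_pow, map_pow]; exact h
  have hmem := Ideal.Quotient.eq_zero_iff_mem.mp hmk
  obtain ⟨u, v, huv⟩ := Ideal.mem_span_pair.mp hmem
  exact stmt14_laux k u v huv

/-- in `Λ = k[x,z,s,s⁻¹]/(xz, x³+z³)` one has `x³ ≠ 0`, and there
is no `k`-bilinear `g` (of degree `-1`) satisfying the five listed Hochschild
coboundary equations (summing them would give the contradiction `x³ = 0`). -/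
theorem stmt_14 (k : Type) [Field k] [CharP k 2] :
    wx k ^ 3 ≠ 0 ∧
    ¬ ∃ g : LamXZ k →ₗ[k] LamXZ k →ₗ[k] LamXZ k,
      (wx k * g (wz k) (wx k ^ 2) + g (wx k) (wz k) * wx k ^ 2 = wx k ^ 3) ∧
      (wx k ^ 2 * g (wx k) (wz k) + g (wx k ^ 3) (wz k) + g (wx k ^ 2) (wx k) * wz k = 0) ∧
      (wz k * g (wx k ^ 2) (wx k) + g (wz k) (wx k ^ 3) + g (wz k) (wx k ^ 2) * wx k = 0) ∧
      (wz k * g (wz k ^ 2) (wz k) + g (wz k ^ 3) (wz k) + g (wz k) (wz k ^ 3)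
        + g (wz k) (wz k ^ 2) * wz k = 0) ∧
      (wz k ^ 2 * g (wz k) (wz k) + wz k * g (wz k ^ 2) (wz k) + wz k * g (wz k) (wz k ^ 2)
        + wz k * g (wz k) (wz k) * wz k = 0) := by
  have hx3ne := stmt14_x3_ne k
  refine ⟨hx3ne, ?_⟩
  rintro ⟨g, h1, h2, h3, h4, h5⟩
  have h2k : (2 : k) = 0 := by exact_mod_cast CharP.cast_eq_zero k 2
  have htwo : (2 : LamXZ k) = 0 := by
    rw [← map_ofNat (algebraMap k (LamXZ k)) 2, h2k, map_zero]
  have eA : wx k ^ 3 = (Ideal.Quotient.mk _ (LaurentPolynomial.C ((X 0 : MvPolynomial (Fin 2) k)) ^ 3) : LamXZ k) :=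
    (map_pow _ _ _).symm
  have eB : wz k ^ 3 = (Ideal.Quotient.mk _ (LaurentPolynomial.C ((X 1 : MvPolynomial (Fin 2) k)) ^ 3) : LamXZ k) :=
    (map_pow _ _ _).symm
  have hsum : wx k ^ 3 + wz k ^ 3 = 0 := by
    calc wx k ^ 3 + wz k ^ 3
        = (Ideal.Quotient.mk _ (LaurentPolynomial.C ((X 0 : MvPolynomial (Fin 2) k)) ^ 3) : LamXZ k)
          + Ideal.Quotient.mk _ (LaurentPolynomial.C ((X 1 : MvPolynomial (Fin 2) k)) ^ 3) := by
            rw [eA, eB]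
      _ = Ideal.Quotient.mk _ (LaurentPolynomial.C ((X 0 : MvPolynomial (Fin 2) k)) ^ 3
          + LaurentPolynomial.C ((X 1 : MvPolynomial (Fin 2) k)) ^ 3) := (map_add _ _ _).symm
      _ = Ideal.Quotient.mk _ (LaurentPolynomial.C ((X 0 : MvPolynomial (Fin 2) k) ^ 3 + X 1 ^ 3)) :=
          congrArg _ (by rw [map_add, map_pow, map_pow])
      _ = 0 := Ideal.Quotient.eq_zero_iff_mem.mpr (Ideal.subset_span (by simp))
  have hx3z3 : wx k ^ 3 = wz k ^ 3 := by
    linear_combination hsum - (wz k ^ 3) * htwo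
  rw [hx3z3] at h2 h3
  have hzero : wx k ^ 3 = 0 := by
    linear_combination (-1 : LamXZ k) * h1 - h2 - h3 - h4 - h5 +
      (wx k * g (wz k) (wx k ^ 2) + g (wx k) (wz k) * wx k ^ 2 + g (wz k ^ 3) (wz k)
        + g (wx k ^ 2) (wx k) * wz k + g (wz k) (wz k ^ 3) + wz k * g (wz k ^ 2) (wz k)
        + g (wz k) (wz k ^ 2) * wz k + wz k ^ 2 * g (wz k) (wz k)) * htwo
  exact hx3ne hzero
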